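/- For the function H defined by H(x) = e^{-x}(σ²/2 - π(x)) for x ≤ x_α and H(x) = (1-γ)e^{-x}(σ²/2 - π(x)) for x > x_α, where π(x) = r - r^G + σ²/2 - max(δ(x-β) - r^G, 0), the bound -(r - r^G) ≤ H(x) ≤ δ holds for all x ≥ 0. -/
import Mathlib


/-- The bound -(r - r^G) ≤ H(x) ≤ δ for all x ≥ 0, where
H(x) = e^{-x}(σ²/2 - π(x)) for x ≤ x_α and H(x) = (1-γ)e^{-x}(σ²/2 - π(x)) for x > x_α. -/
theorem stmt4 (r rG σ δ β γ α : ℝ) (hrG : 0 < rG) (hr : rG < r) (hσ : 0 < σ)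
    (hδ : 0 < δ) (hβ : 0 < β) (hγ : γ ∈ Set.Ioo (0:ℝ) 1) (hα : α ∈ Set.Ioo (0:ℝ) 1)
    (xα : ℝ) (hxα : xα = Real.log (1/α))
    (π : ℝ → ℝ) (hπ : ∀ x, π x = r - rG + σ^2/2 - max (δ*(x-β) - rG) 0)
    (H : ℝ → ℝ)
    (hH1 : ∀ x, x ≤ xα → H x = Real.exp (-x) * (σ^2/2 - π x))
    (hH2 : ∀ x, xα < x → H x = (1-γ) * Real.exp (-x) * (σ^2/2 - π x)) :
    ∀ x : ℝ, 0 ≤ x → -(r - rG) ≤ H x ∧ H x ≤ δ := by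
  intro x hx
  set M : ℝ := max (δ*(x-β) - rG) 0 with hM
  have hM0 : 0 ≤ M := le_max_right _ _
  have hexp0 : 0 < Real.exp (-x) := Real.exp_pos _
  have hexp1 : Real.exp (-x) ≤ 1 := by
    rw [Real.exp_le_one_iff]; linarith
  have hval : σ^2/2 - π x = M - (r - rG) := by rw [hπ]; ring
  have hMbound : Real.exp (-x) * M ≤ δ := by
    rcases le_or_gt (δ*(x-β) - rG) 0 with h | h
    · rw [hM, max_eq_right h, mul_zero]; linarith
    · rw [hM, max_eq_left h.le]
      have hxe : x + 1 ≤ Real.exp x := Real.add_one_le_exp x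
      have h1 : δ*(x-β) - rG ≤ δ * Real.exp x := by nlinarith
      have h2 : Real.exp (-x) * (δ * Real.exp x) = δ := by
        rw [Real.exp_neg]; field_simp
      nlinarith
  obtain ⟨c, hc, hc0, hc1⟩ : ∃ c : ℝ, H x = c * Real.exp (-x) * (M - (r - rG))
      ∧ 0 < c ∧ c ≤ 1 := by
    rcases le_or_gt x xα with h | h
    · exact ⟨1, by rw [hH1 x h, hval]; ring, one_pos, le_refl 1⟩
    · exact ⟨1 - γ, by rw [hH2 x h, hval], by linarith [hγ.2], by linarith [hγ.1]⟩
  have hK : 0 < r - rG := by linarith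
  have hce : 0 < c * Real.exp (-x) := mul_pos hc0 hexp0
  have hce1 : c * Real.exp (-x) ≤ 1 := by nlinarith
  constructor
  · rw [hc]; nlinarith
  · rw [hc]; nlinarith
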